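/- Let M be an n₀×n₀ array of cells, where each cell (x,y) contains a finite multiset of jobs, such that every row contains exactly m jobs in total and every column contains exactly m jobs in total (counted with multiplicity). Then the jobs can be colored with m colors so that in every row all m jobs have pairwise distinct colors and in every column all m jobs have pairwise distinct colors. -/

import Mathlib

open Finset

/-- Put `m·n₀` jobs in an `n₀ × n₀` array (job `i` sits at cell `(x i, y i)`), with
exactly `m` jobs in every row and exactly `m` jobs in every column.  Then the jobs
can be colored with `m` colors so that in every row and in every column all jobs
get pairwise distinct colors. -/
theorem stmt3 (m n₀ : ℕ) (x y : Fin (m * n₀) → Fin n₀)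
    (hx : ∀ r, (Finset.univ.filter fun i => x i = r).card = m)
    (hy : ∀ c, (Finset.univ.filter fun i => y i = c).card = m) :
    ∃ color : Fin (m * n₀) → Fin m,
      ∀ i j, i ≠ j → (x i = x j ∨ y i = y j) → color i ≠ color j := by
  classical
  induction m with
  | zero =>
    exact ⟨fun i => absurd i.2 (by simp), fun i j _ _ _ => absurd i.2 (by simp)⟩
  | succ m ih =>
    -- Hall's condition for the bipartite multigraph rows → columns
    set t : Fin n₀ → Finset (Fin n₀) :=
      fun r => (univ.filter fun i => x i = r).image y with ht
    have hall : ∀ s : Finset (Fin n₀), s.card ≤ (s.biUnion t).card := by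
      intro s
      set T : Finset (Fin ((m+1) * n₀)) := univ.filter fun i => x i ∈ s with hT
      have hTcard : T.card = s.card * (m + 1) := by
        rw [Finset.card_eq_sum_card_fiberwise (f := x) (s := T) (t := s)
          (fun i hi => (mem_filter.mp hi).2)]
        rw [Finset.sum_congr rfl (fun r hr => ?_), Finset.sum_const, smul_eq_mul]
        rw [show T.filter (fun i => x i = r) = univ.filter (fun i => x i = r) by
          ext i; simp only [hT, Finset.mem_filter, Finset.filter_filter, mem_univ, true_and]
          exact ⟨fun h => h.2, fun h => ⟨h ▸ hr, h⟩⟩]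
        exact hx r
      have hmemB : ∀ i ∈ T, y i ∈ s.biUnion t := by
        intro i hi
        exact Finset.mem_biUnion.mpr ⟨x i, (mem_filter.mp hi).2,
          Finset.mem_image.mpr ⟨i, mem_filter.mpr ⟨mem_univ i, rfl⟩, rfl⟩⟩
      have hTle : T.card ≤ (s.biUnion t).card * (m + 1) := by
        rw [Finset.card_eq_sum_card_fiberwise (f := y) hmemB]
        calc ∑ c ∈ s.biUnion t, (T.filter fun i => y i = c).card
            ≤ ∑ c ∈ s.biUnion t, (m + 1) := by
              refine Finset.sum_le_sum fun c _ => ?_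
              exact le_trans (Finset.card_le_card
                (Finset.filter_subset_filter _ (Finset.subset_univ _))) (le_of_eq (hy c))
          _ = (s.biUnion t).card * (m + 1) := by rw [Finset.sum_const, smul_eq_mul]
      exact Nat.le_of_mul_le_mul_right (hTcard ▸ hTle) (Nat.succ_pos m)
    obtain ⟨f, hfinj, hf⟩ := (Finset.all_card_le_biUnion_card_iff_exists_injective t).mp hall
    -- pick one job per row realizing the matching
    have hpick : ∀ r, ∃ i, x i = r ∧ y i = f r := by
      intro r
      obtain ⟨i, hi, hyi⟩ := Finset.mem_image.mp (hf r)
      exact ⟨i, (mem_filter.mp hi).2, hyi⟩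
    choose g hgx hgy using hpick
    have hginj : Function.Injective g := fun a b h => by rw [← hgx a, ← hgx b, h]
    set M : Finset (Fin ((m+1) * n₀)) := univ.image g with hM
    set R : Finset (Fin ((m+1) * n₀)) := univ.filter (fun i => i ∉ M) with hR
    -- row fibers of R
    have hrowR : ∀ r, (R.filter fun i => x i = r).card = m := by
      intro r
      have hset : R.filter (fun i => x i = r) = (univ.filter fun i => x i = r).erase (g r) := by
        ext i
        simp only [hR, hM, Finset.mem_filter, Finset.filter_filter, Finset.mem_erase,
          mem_univ, true_and, Finset.mem_image]
        constructor
        · rintro ⟨hnm, hxi⟩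
          exact ⟨fun h => hnm ⟨r, h.symm⟩, hxi⟩
        · rintro ⟨hne, hxi⟩
          refine ⟨?_, hxi⟩
          rintro ⟨a, rfl⟩
          have : a = r := by rw [← hgx a, hxi]
          exact hne (by rw [this])
      have hmem : g r ∈ univ.filter (fun i => x i = r) := mem_filter.mpr ⟨mem_univ _, hgx r⟩
      rw [hset, Finset.card_erase_of_mem hmem, hx r]
      omega
    -- column fibers of R
    have hcolR : ∀ c, (R.filter fun i => y i = c).card = m := by
      intro c
      obtain ⟨rc, hrc⟩ := (Finite.injective_iff_surjective.mp hfinj) c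
      have hset : R.filter (fun i => y i = c) = (univ.filter fun i => y i = c).erase (g rc) := by
        ext i
        simp only [hR, hM, Finset.mem_filter, Finset.filter_filter, Finset.mem_erase,
          mem_univ, true_and, Finset.mem_image]
        constructor
        · rintro ⟨hnm, hyi⟩
          exact ⟨fun h => hnm ⟨rc, h.symm⟩, hyi⟩
        · rintro ⟨hne, hyi⟩
          refine ⟨?_, hyi⟩
          rintro ⟨a, rfl⟩
          have : a = rc := hfinj (by rw [← hgy a, hyi, hrc])
          exact hne (by rw [this])
      have hmem : g rc ∈ univ.filter (fun i => y i = c) :=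
        mem_filter.mpr ⟨mem_univ _, by rw [hgy rc, hrc]⟩
      rw [hset, Finset.card_erase_of_mem hmem, hy c]
      omega
    -- cardinality of R
    have hcard : m * n₀ = R.card := by
      rw [Finset.card_eq_sum_card_fiberwise (f := x) (t := univ) (fun i _ => mem_univ (x i))]
      rw [Finset.sum_congr rfl (fun r _ => hrowR r), Finset.sum_const, smul_eq_mul,
        Finset.card_univ, Fintype.card_fin, mul_comm]
    set e : Fin (m * n₀) ≃ {i // i ∈ R} := (finCongr hcard).trans R.equivFin.symm with he
    have key : ∀ (p : Fin ((m+1) * n₀) → Prop) [DecidablePred p],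
        (univ.filter fun i => p (e i).1).card = (R.filter p).card := by
      intro p _
      refine Finset.card_bij (fun i _ => (e i).1) ?_ ?_ ?_
      · intro i hi
        exact mem_filter.mpr ⟨(e i).2, (mem_filter.mp hi).2⟩
      · intro a _ b _ hab
        exact e.injective (Subtype.ext hab)
      · intro j hj
        refine ⟨e.symm ⟨j, (mem_filter.mp hj).1⟩, mem_filter.mpr ⟨mem_univ _, ?_⟩, ?_⟩
        · simp only [Equiv.apply_symm_apply]
          exact (mem_filter.mp hj).2
        · exact congrArg Subtype.val (e.apply_symm_apply _)
    obtain ⟨c0, hc0⟩ := ih (fun i => x (e i).1) (fun i => y (e i).1)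
      (fun r => (key (fun i => x i = r)).trans (hrowR r))
      (fun c => (key (fun i => y i = c)).trans (hcolR c))
    refine ⟨fun i => if h : i ∈ R then (c0 (e.symm ⟨i, h⟩)).castSucc else Fin.last m,
      fun i j hij hshare => ?_⟩
    by_cases hi : i ∈ R <;> by_cases hj : j ∈ R
    · simp only [hi, hj, dif_pos]
      intro heq
      refine hc0 (e.symm ⟨i, hi⟩) (e.symm ⟨j, hj⟩) ?_ ?_ (Fin.castSucc_injective m heq)
      · intro h
        exact hij (congrArg Subtype.val (e.symm.injective h))
      · simpa only [Equiv.apply_symm_apply] using hshare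
    · simp only [hi, hj, dif_pos, dif_neg, not_false_iff]
      exact (Fin.castSucc_lt_last _).ne
    · simp only [hi, hj, dif_pos, dif_neg, not_false_iff]
      exact (Fin.castSucc_lt_last _).ne'
    · exfalso
      have hiM : i ∈ M := by by_contra h; exact hi (mem_filter.mpr ⟨mem_univ i, h⟩)
      have hjM : j ∈ M := by by_contra h; exact hj (mem_filter.mpr ⟨mem_univ j, h⟩)
      obtain ⟨a, -, rfl⟩ := Finset.mem_image.mp hiM
      obtain ⟨b, -, rfl⟩ := Finset.mem_image.mp hjM
      rcases hshare with h | h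
      · exact hij (congrArg g (by rw [← hgx a, ← hgx b, h]))
      · exact hij (congrArg g (hfinj (by rw [← hgy a, ← hgy b, h])))
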